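/- Let R be a commutative ring and f(x) a zero-divisor in the polynomial ring R[x]. Then there exists a nonzero constant c ∈ R such that c·f(x) = 0. -/

import Mathlib

theorem mcCoy (R : Type*) [CommRing R] (f : Polynomial R)
    (hf : ∃ g : Polynomial R, g ≠ 0 ∧ f * g = 0) :
    ∃ c : R, c ≠ 0 ∧ Polynomial.C c * f = 0 := by
  obtain ⟨g, hg, hfg⟩ := hf
  have : f ∉ nonZeroDivisors (Polynomial R) := by
    intro h
    exact hg (mem_nonZeroDivisors_iff_right.1 h g (by rw [mul_comm]; exact hfg))
  obtain ⟨a, ha, h⟩ := Polynomial.notMem_nonZeroDivisors_iff.1 this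
  exact ⟨a, ha, by rwa [← Polynomial.smul_eq_C_mul]⟩
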